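/- Let K ⊂ ℝⁿ be a star-shaped body with respect to the origin (i.e., for every x ∈ K and t ∈ [0,1], tx ∈ K), and let γ be the standard Gaussian measure on ℝⁿ with density (2π)^{−n/2} e^{−|x|²/2}. Then ∫_K |x|² dγ(x) ≤ n·γ(K). -/

import Mathlib

open MeasureTheory Set Real Filter Topology
open scoped ENNReal NNReal

lemma pi_gaussian_eq (n : ℕ) :
    (Measure.pi fun _ : Fin n => ProbabilityTheory.gaussianReal 0 1) =
      volume.withDensity (fun x : Fin n → ℝ =>
        ENNReal.ofReal (∏ i, ProbabilityTheory.gaussianPDFReal 0 1 (x i))) := by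
  refine Measure.pi_eq (μ := fun _ : Fin n => ProbabilityTheory.gaussianReal 0 1) fun s hs => ?_
  rw [withDensity_apply _ (MeasurableSet.univ_pi hs)]
  have hind : ∀ x : Fin n → ℝ,
      (univ.pi s).indicator (fun x : Fin n → ℝ =>
        ENNReal.ofReal (∏ i, ProbabilityTheory.gaussianPDFReal 0 1 (x i))) x
      = ENNReal.ofReal (∏ i, (s i).indicator (ProbabilityTheory.gaussianPDFReal 0 1) (x i)) := by
    intro x
    by_cases hx : x ∈ univ.pi s
    · rw [indicator_of_mem hx]
      rw [mem_univ_pi] at hx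
      congr 1
      exact Finset.prod_congr rfl fun i _ => (indicator_of_mem (hx i) _).symm
    · rw [indicator_of_notMem hx]
      rw [mem_univ_pi, not_forall] at hx
      obtain ⟨i, hi⟩ := hx
      rw [Finset.prod_eq_zero (Finset.mem_univ i) (indicator_of_notMem hi _), ENNReal.ofReal_zero]
  have hint : Integrable (fun x : Fin n → ℝ =>
      ∏ i, (s i).indicator (ProbabilityTheory.gaussianPDFReal 0 1) (x i)) :=
    Integrable.fintype_prod fun i =>
      ((ProbabilityTheory.integrable_gaussianPDFReal 0 1).indicator (hs i))
  calc ∫⁻ x in univ.pi s,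
        ENNReal.ofReal (∏ i, ProbabilityTheory.gaussianPDFReal 0 1 (x i)) ∂volume
      = ∫⁻ (x : Fin n → ℝ), ENNReal.ofReal
          (∏ i, (s i).indicator (ProbabilityTheory.gaussianPDFReal 0 1) (x i)) ∂volume := by
        rw [← lintegral_indicator (MeasurableSet.univ_pi hs)]
        exact lintegral_congr hind
    _ = ENNReal.ofReal (∫ x : Fin n → ℝ,
          ∏ i, (s i).indicator (ProbabilityTheory.gaussianPDFReal 0 1) (x i)) := by
        rw [← ofReal_integral_eq_lintegral_ofReal hint]
        exact ae_of_all _ fun x => Finset.prod_nonneg fun i _ =>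
          indicator_nonneg (fun y _ => ProbabilityTheory.gaussianPDFReal_nonneg 0 1 y) _
    _ = ENNReal.ofReal (∏ i, ∫ x : ℝ, (s i).indicator (ProbabilityTheory.gaussianPDFReal 0 1) x) := by
        rw [integral_fintype_prod_volume_eq_prod]
    _ = ∏ i : Fin n, ProbabilityTheory.gaussianReal 0 1 (s i) := by
        rw [ENNReal.ofReal_prod_of_nonneg]
        · refine Finset.prod_congr rfl fun i _ => ?_
          rw [integral_indicator (hs i),
            ← ProbabilityTheory.gaussianReal_apply_eq_integral 0 one_ne_zero]
        · exact fun i _ => integral_nonneg fun x =>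
            indicator_nonneg (fun y _ => ProbabilityTheory.gaussianPDFReal_nonneg 0 1 y) _

lemma prod_gaussianPDFReal_eq (n : ℕ) (x : Fin n → ℝ) :
    (∏ i, ProbabilityTheory.gaussianPDFReal 0 1 (x i))
      = (Real.sqrt (2 * Real.pi))⁻¹ ^ n * Real.exp (-(∑ i, x i ^ 2) / 2) := by
  simp only [ProbabilityTheory.gaussianPDFReal, NNReal.coe_one, mul_one, sub_zero]
  rw [Finset.prod_mul_distrib, Finset.prod_const, Finset.card_univ, Fintype.card_fin,
    ← Real.exp_sum]
  congr 1
  rw [← Finset.sum_div, ← Finset.sum_neg_distrib]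

lemma key_ineq (n : ℕ) (K : Set (Fin n → ℝ)) (hKc : IsCompact K) (h0 : (0 : Fin n → ℝ) ∈ K)
    (hstar : ∀ x ∈ K, ∀ t ∈ Set.Icc (0:ℝ) 1, t • x ∈ K) :
    ∫ y in K, (∑ i, y i ^ 2) * Real.exp (-(∑ i, y i ^ 2) / 2) ∂volume
      ≤ n * ∫ y in K, Real.exp (-(∑ i, y i ^ 2) / 2) ∂volume := by
  set q : (Fin n → ℝ) → ℝ := fun x => ∑ i, x i ^ 2 with hq_def
  have hK_meas : MeasurableSet K := hKc.measurableSet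
  have hq_cont : Continuous q := by fun_prop
  have hq_nonneg : ∀ x, 0 ≤ q x := fun x => Finset.sum_nonneg fun i _ => sq_nonneg _
  have hq_smul : ∀ (t : ℝ) (x : Fin n → ℝ), q (t • x) = t ^ 2 * q x := by
    intro t x
    simp only [hq_def, Pi.smul_apply, smul_eq_mul, mul_pow, Finset.mul_sum]
  -- bound on q over K
  obtain ⟨z, hzK, hzmax⟩ := hKc.exists_isMaxOn ⟨0, h0⟩ hq_cont.continuousOn
  set M : ℝ := q z with hM_def
  have hM0 : 0 ≤ M := hq_nonneg z
  have hM : ∀ y ∈ K, q y ≤ M := hzmax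
  -- the family
  set F : ℝ → (Fin n → ℝ) → ℝ := fun t y => t ^ n * Real.exp (-(t ^ 2 * q y) / 2) with hF_def
  set Fd : ℝ → (Fin n → ℝ) → ℝ :=
    fun t y => (n * t ^ (n - 1) - t ^ (n + 1) * q y) * Real.exp (-(t ^ 2 * q y) / 2) with hFd_def
  set g : ℝ → ℝ := fun t => ∫ y in K, F t y ∂volume with hg_def
  have hF_cont : ∀ t : ℝ, Continuous (F t) := by intro t; fun_prop
  have hFd_cont : ∀ t : ℝ, Continuous (Fd t) := by intro t; fun_prop
  have hF_int : ∀ t : ℝ, IntegrableOn (F t) K volume :=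
    fun t => (hF_cont t).continuousOn.integrableOn_compact hKc
  have hFd_int : ∀ t : ℝ, IntegrableOn (Fd t) K volume :=
    fun t => (hFd_cont t).continuousOn.integrableOn_compact hKc
  -- monotonicity: g t ≤ g 1 for t ∈ (0,1)
  have hmono : ∀ t : ℝ, t ∈ Set.Ioo (0:ℝ) 1 → g t ≤ g 1 := by
    intro t ht
    obtain ⟨ht0, ht1⟩ := ht
    set h : (Fin n → ℝ) → ℝ := K.indicator (fun x => Real.exp (-q x / 2)) with hh_def
    have hexp_int : IntegrableOn (fun x => Real.exp (-q x / 2)) K volume := by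
      exact (Continuous.continuousOn (by fun_prop)).integrableOn_compact hKc
    have hh_int : Integrable h volume := hexp_int.integrable_indicator hK_meas
    have hh_smul_int : Integrable (fun x => h (t • x)) volume :=
      (integrable_comp_smul_iff volume h (ne_of_gt ht0)).2 hh_int
    have hpt : ∀ x, K.indicator (fun x => Real.exp (-(t ^ 2 * q x) / 2)) x ≤ h (t • x) := by
      intro x
      by_cases hx : x ∈ K
      · rw [indicator_of_mem hx]
        have htK : t • x ∈ K := hstar x hx t ⟨le_of_lt ht0, le_of_lt ht1⟩
        rw [hh_def, indicator_of_mem htK, hq_smul]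
      · rw [indicator_of_notMem hx]
        exact indicator_nonneg (fun y _ => (Real.exp_pos _).le) _
    have hint_t : IntegrableOn (fun x => Real.exp (-(t ^ 2 * q x) / 2)) K volume :=
      (Continuous.continuousOn (by fun_prop)).integrableOn_compact hKc
    have step1 : ∫ x in K, Real.exp (-(t ^ 2 * q x) / 2) ∂volume ≤ ∫ x, h (t • x) ∂volume := by
      rw [← integral_indicator hK_meas]
      exact integral_mono (hint_t.integrable_indicator hK_meas) hh_smul_int hpt
    have step2 : ∫ x, h (t • x) ∂volume = |((t : ℝ) ^ n)⁻¹| * ∫ x, h x ∂volume := by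
      have := MeasureTheory.Measure.integral_comp_smul (volume : Measure (Fin n → ℝ)) h t
      rwa [Module.finrank_fin_fun, smul_eq_mul] at this
    have hg1 : ∫ x, h x ∂volume = g 1 := by
      rw [hh_def, integral_indicator hK_meas, hg_def]
      simp [hF_def]
    have habs : |((t : ℝ) ^ n)⁻¹| = (t ^ n)⁻¹ := abs_of_nonneg (by positivity)
    have hg1_nonneg : 0 ≤ g 1 := by
      rw [← hg1]
      exact integral_nonneg fun x => indicator_nonneg (fun y _ => (Real.exp_pos _).le) _
    have : g t = t ^ n * ∫ x in K, Real.exp (-(t ^ 2 * q x) / 2) ∂volume := by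
      rw [hg_def]
      simp only [hF_def]
      rw [integral_const_mul]
    rw [this]
    calc t ^ n * ∫ x in K, Real.exp (-(t ^ 2 * q x) / 2) ∂volume
        ≤ t ^ n * ((t ^ n)⁻¹ * g 1) := by
          refine mul_le_mul_of_nonneg_left ?_ (by positivity)
          rw [← habs, ← hg1, ← step2]
          exact step1
      _ = g 1 := by
          field_simp
  -- derivative of F in t
  have hder : ∀ (y : Fin n → ℝ) (t : ℝ), HasDerivAt (fun s => F s y) (Fd t y) t := by
    intro y t
    have h1 : HasDerivAt (fun s : ℝ => s ^ n) ((n : ℝ) * t ^ (n - 1)) t := hasDerivAt_pow n t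
    have h2 := (((hasDerivAt_pow 2 t).mul_const (q y)).neg).div_const 2
    have h3 := h2.exp
    have h4 : HasDerivAt (fun s => F s y) ((n : ℝ) * t ^ (n - 1) * Real.exp (-(t ^ 2 * q y) / 2)
        + t ^ n * (Real.exp (-(t ^ 2 * q y) / 2) * (-(((2:ℕ):ℝ) * t ^ (2 - 1) * q y) / 2))) t :=
      h1.mul h3
    convert h4 using 1
    simp only [hFd_def, hF_def]
    norm_num
    ring
  set B : ℝ := n * 2 ^ n + 2 ^ (n + 1) * M with hB_def
  have hbound : ∀ y ∈ K, ∀ t ∈ Metric.ball (1:ℝ) 1, ‖Fd t y‖ ≤ B := by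
    intro y hy t ht
    rw [Metric.mem_ball, Real.dist_eq, abs_lt] at ht
    have ht0 : 0 < t := by linarith [ht.1]
    have ht2 : t < 2 := by linarith [ht.2]
    have hexp1 : Real.exp (-(t ^ 2 * q y) / 2) ≤ 1 := by
      rw [Real.exp_le_one_iff]
      have : 0 ≤ t ^ 2 * q y := mul_nonneg (sq_nonneg t) (hq_nonneg y)
      linarith
    have h1 : t ^ (n - 1) ≤ 2 ^ n :=
      le_trans (pow_le_pow_left₀ ht0.le ht2.le _) (pow_le_pow_right₀ one_le_two (Nat.sub_le n 1))
    have h2 : t ^ (n + 1) ≤ 2 ^ (n + 1) := pow_le_pow_left₀ ht0.le ht2.le _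
    have hA : t ^ (n + 1) * q y ≤ 2 ^ (n + 1) * M :=
      mul_le_mul h2 (hM y hy) (hq_nonneg y) (by positivity)
    have hB2 : (n : ℝ) * t ^ (n - 1) ≤ n * 2 ^ n :=
      mul_le_mul_of_nonneg_left h1 (Nat.cast_nonneg n)
    have habs : |(n : ℝ) * t ^ (n - 1) - t ^ (n + 1) * q y| ≤ B := by
      rw [abs_le]
      constructor
      · have hp1 : 0 ≤ (n : ℝ) * t ^ (n - 1) := by positivity
        simp only [hB_def]
        linarith
      · have hp2 : 0 ≤ t ^ (n + 1) * q y := mul_nonneg (by positivity) (hq_nonneg y)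
        simp only [hB_def]
        have hBM : 0 ≤ (2:ℝ) ^ (n + 1) * M := by positivity
        linarith
    calc ‖Fd t y‖ = |(n : ℝ) * t ^ (n - 1) - t ^ (n + 1) * q y| * Real.exp (-(t ^ 2 * q y) / 2) := by
          rw [hFd_def]
          rw [Real.norm_eq_abs, abs_mul, abs_of_pos (Real.exp_pos _)]
      _ ≤ B * 1 := mul_le_mul habs hexp1 (Real.exp_pos _).le (le_trans (abs_nonneg _) habs)
      _ = B := mul_one B
  have hg_deriv : HasDerivAt g (∫ y in K, Fd 1 y ∂volume) 1 := by
    have hres := hasDerivAt_integral_of_dominated_loc_of_deriv_le (μ := volume.restrict K)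
      (F := F) (F' := Fd) (x₀ := (1:ℝ)) (bound := fun _ => B) (Metric.ball_mem_nhds 1 one_pos)
      (Eventually.of_forall fun t => (hF_cont t).aestronglyMeasurable)
      (hF_int 1) ((hFd_cont 1).aestronglyMeasurable)
      ((ae_restrict_mem hK_meas).mono fun y hy t ht => hbound y hy t ht)
      (integrableOn_const hKc.measure_lt_top.ne)
      (Eventually.of_forall fun y t _ => hder y t)
    exact hres.2
  have hD_nonneg : 0 ≤ ∫ y in K, Fd 1 y ∂volume := by
    have hs := hasDerivAt_iff_tendsto_slope.1 hg_deriv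
    have hs' : Tendsto (slope g 1) (𝓝[<] (1:ℝ)) (𝓝 (∫ y in K, Fd 1 y ∂volume)) :=
      hs.mono_left (nhdsWithin_mono 1 fun x hx => ne_of_lt hx)
    refine ge_of_tendsto hs' ?_
    filter_upwards [Ioo_mem_nhdsLT_of_mem (⟨zero_lt_one, le_refl 1⟩ : (1:ℝ) ∈ Set.Ioc 0 1)]
      with t ht
    rw [slope_def_field]
    exact div_nonneg_of_nonpos (sub_nonpos.2 (hmono t ht)) (by linarith [ht.2])
  have hFd1 : ∀ y, Fd 1 y = (n : ℝ) * Real.exp (-q y / 2) - q y * Real.exp (-q y / 2) := by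
    intro y
    simp only [hFd_def, one_pow, one_mul]
    ring
  have intA : IntegrableOn (fun y => (n : ℝ) * Real.exp (-q y / 2)) K volume :=
    (Continuous.continuousOn (by fun_prop)).integrableOn_compact hKc
  have intB : IntegrableOn (fun y => q y * Real.exp (-q y / 2)) K volume :=
    (Continuous.continuousOn (by fun_prop)).integrableOn_compact hKc
  have hsplit : ∫ y in K, Fd 1 y ∂volume
      = (n : ℝ) * (∫ y in K, Real.exp (-q y / 2) ∂volume)
        - ∫ y in K, q y * Real.exp (-q y / 2) ∂volume := by
    calc ∫ y in K, Fd 1 y ∂volume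
        = ∫ y in K, ((n : ℝ) * Real.exp (-q y / 2) - q y * Real.exp (-q y / 2)) ∂volume :=
          integral_congr_ae (Eventually.of_forall fun y => hFd1 y)
      _ = (∫ y in K, (n : ℝ) * Real.exp (-q y / 2) ∂volume)
            - ∫ y in K, q y * Real.exp (-q y / 2) ∂volume := integral_sub intA intB
      _ = (n : ℝ) * (∫ y in K, Real.exp (-q y / 2) ∂volume)
            - ∫ y in K, q y * Real.exp (-q y / 2) ∂volume := by rw [integral_const_mul]
  have hfinal : ∫ y in K, q y * Real.exp (-q y / 2) ∂volume
      ≤ (n : ℝ) * ∫ y in K, Real.exp (-q y / 2) ∂volume := by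
    linarith [hD_nonneg, hsplit]
  exact hfinal

lemma pi_gaussian_eq' (n : ℕ) :
    (Measure.pi fun _ : Fin n => ProbabilityTheory.gaussianReal 0 1) =
      volume.withDensity (fun x : Fin n → ℝ =>
        ENNReal.ofReal ((Real.sqrt (2 * Real.pi))⁻¹ ^ n * Real.exp (-(∑ i, x i ^ 2) / 2))) := by
  rw [pi_gaussian_eq n]
  congr 1
  funext x
  rw [prod_gaussianPDFReal_eq n x]

/-- For a compact star-shaped (w.r.t. the origin) body `K ⊆ ℝⁿ` and the standard Gaussian
measure `γ`, one has `∫_K |x|² dγ ≤ n·γ(K)`. -/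
theorem stmt_4 (n : ℕ) (K : Set (Fin n → ℝ)) (hKc : IsCompact K) (h0 : (0 : Fin n → ℝ) ∈ K)
    (hstar : ∀ x ∈ K, ∀ t ∈ Set.Icc (0:ℝ) 1, t • x ∈ K)
    (γ : Measure (Fin n → ℝ))
    (hγ : γ = Measure.pi fun _ : Fin n => ProbabilityTheory.gaussianReal 0 1) :
    ∫ x in K, (∑ i, x i ^ 2) ∂γ ≤ n * (γ K).toReal := by
  have hK_meas : MeasurableSet K := hKc.measurableSet
  set c : ℝ := (Real.sqrt (2 * Real.pi))⁻¹ ^ n with hc_def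
  have hc0 : 0 ≤ c := by positivity
  set G : (Fin n → ℝ) → ℝ := fun x => c * Real.exp (-(∑ i, x i ^ 2) / 2) with hG_def
  have hG_cont : Continuous G := by fun_prop
  have hG_nonneg : ∀ x, 0 ≤ G x := fun x => by positivity
  have hγ' : γ = volume.withDensity (fun x => ENNReal.ofReal (G x)) := by
    rw [hγ, pi_gaussian_eq' n]
  have hG_int : IntegrableOn G K volume := hG_cont.continuousOn.integrableOn_compact hKc
  -- measure of K
  have h1 : (γ K).toReal = ∫ y in K, G y ∂volume := by
    rw [hγ', withDensity_apply _ hK_meas,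
      ← ofReal_integral_eq_lintegral_ofReal hG_int (ae_of_all _ fun y => hG_nonneg y),
      ENNReal.toReal_ofReal (integral_nonneg fun y => hG_nonneg y)]
  -- integral over K
  have h2 : ∫ x in K, (∑ i, x i ^ 2) ∂γ = ∫ y in K, G y * (∑ i, y i ^ 2) ∂volume := by
    rw [hγ', restrict_withDensity hK_meas]
    have hmeas : Measurable fun x => (G x).toNNReal :=
      hG_cont.measurable.real_toNNReal
    have heq : (fun x => ENNReal.ofReal (G x)) = fun x => ((G x).toNNReal : ℝ≥0∞) := rfl
    rw [heq, integral_withDensity_eq_integral_smul hmeas]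
    refine integral_congr_ae (ae_of_all _ fun y => ?_)
    simp only [NNReal.smul_def, Real.coe_toNNReal _ (hG_nonneg y), smul_eq_mul]
  have key : ∫ y in K, (∑ i, y i ^ 2) * Real.exp (-(∑ i, y i ^ 2) / 2) ∂volume
      ≤ n * ∫ y in K, Real.exp (-(∑ i, y i ^ 2) / 2) ∂volume :=
    key_ineq n K hKc h0 hstar
  calc ∫ x in K, (∑ i, x i ^ 2) ∂γ
      = ∫ y in K, G y * (∑ i, y i ^ 2) ∂volume := h2
    _ = c * ∫ y in K, (∑ i, y i ^ 2) * Real.exp (-(∑ i, y i ^ 2) / 2) ∂volume := by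
        rw [← integral_const_mul]
        exact integral_congr_ae (ae_of_all _ fun y => by rw [hG_def]; ring)
    _ ≤ c * (n * ∫ y in K, Real.exp (-(∑ i, y i ^ 2) / 2) ∂volume) :=
        mul_le_mul_of_nonneg_left key hc0
    _ = n * ∫ y in K, G y ∂volume := by
        have hGc : ∫ y in K, G y ∂volume
            = c * ∫ y in K, Real.exp (-(∑ i, y i ^ 2) / 2) ∂volume := integral_const_mul c _
        rw [hGc]
        ring
    _ = n * (γ K).toReal := by rw [h1]
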